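/- Let c, e : [0,∞) → ℝ be bounded continuous functions with c(t) > 0 and e(t) ≥ 0 for all t ≥ 0, set D(t) = e(t) − c(t), and let p : [0,∞) → ℝ be a differentiable solution of the time-varying Levins model p'(t) = c(t)·p(t)·(1 − p(t)) − e(t)·p(t) with p(0) ∈ (0,1]. If the lower Bohl exponent satisfies β⁻(D) > 0, then there exist constants L ≥ 1 and η > 0 such that p(t) ≤ L·p(0)·exp(−η·t) for all t ≥ 0; in particular the fraction of occupied patches is driven exponentially to zero. -/

import Mathlib

open Filter Set

/-- Transition operator of the scalar linear equation `x' = D t * x`. -/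
noncomputable def Phi (D : ℝ → ℝ) (t s : ℝ) : ℝ :=
  Real.exp (∫ τ in s..t, D τ)

/-- Average of `D` over the interval from `q.1` to `q.2`. -/
noncomputable def bohlAvg (D : ℝ → ℝ) (q : ℝ × ℝ) : ℝ :=
  (q.2 - q.1)⁻¹ * ∫ τ in q.1..q.2, D τ

/-- The filter describing `t - s → +∞` with `t > s ≥ 0` for pairs `q = (s, t)`. -/
def bohlFilter : Filter (ℝ × ℝ) :=
  (Filter.atTop.comap fun q : ℝ × ℝ => q.2 - q.1) ⊓
    Filter.principal {q : ℝ × ℝ | 0 ≤ q.1 ∧ q.1 < q.2}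

/-- Upper Bohl exponent of `D`. -/
noncomputable def bohlUpper (D : ℝ → ℝ) : ℝ :=
  Filter.limsup (bohlAvg D) bohlFilter

/-- Lower Bohl exponent of `D`. -/
noncomputable def bohlLower (D : ℝ → ℝ) : ℝ :=
  Filter.liminf (bohlAvg D) bohlFilter

/-- From a positive lower Bohl exponent, extract a uniform positive average bound. -/
theorem bohl_extract (D : ℝ → ℝ) (M : ℝ)
    (hM : ∀ q : ℝ × ℝ, 0 ≤ q.1 ∧ q.1 < q.2 → |bohlAvg D q| ≤ M)
    (hB : 0 < bohlLower D) :
    ∃ η > (0:ℝ), ∃ T : ℝ, ∀ s t : ℝ, 0 ≤ s → s < t → T ≤ t - s → η ≤ bohlAvg D (s, t) := by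
  have hbdd : Filter.IsBoundedUnder (· ≥ ·) bohlFilter (bohlAvg D) := by
    refine ⟨-M, ?_⟩
    rw [Filter.eventually_map, bohlFilter]
    exact Filter.eventually_inf_principal.2 (Filter.Eventually.of_forall fun q hq =>
      (neg_le_of_abs_le (hM q hq)))
  have hev : ∀ᶠ q in bohlFilter, bohlLower D / 2 < bohlAvg D q :=
    Filter.eventually_lt_of_lt_liminf (by unfold bohlLower at hB ⊢; linarith) hbdd
  rw [bohlFilter, Filter.eventually_inf_principal, Filter.eventually_comap,
    Filter.eventually_atTop] at hev
  obtain ⟨T, hT⟩ := hev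
  exact ⟨bohlLower D / 2, by linarith, T, fun s t hs hst hTt =>
    (hT (t - s) hTt (s, t) rfl ⟨hs, hst⟩).le⟩

/-- Extinction scenario: if `β⁻(e - c) > 0` then the fraction of occupied patches
is driven exponentially to zero. -/
theorem levins_exponential_extinction (c e : ℝ → ℝ)
    (hc_cont : ContinuousOn c (Set.Ici 0)) (he_cont : ContinuousOn e (Set.Ici 0))
    (hc_bdd : ∃ M, ∀ t, 0 ≤ t → |c t| ≤ M) (he_bdd : ∃ M, ∀ t, 0 ≤ t → |e t| ≤ M)
    (hc_pos : ∀ t, 0 ≤ t → 0 < c t) (he_nonneg : ∀ t, 0 ≤ t → 0 ≤ e t)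
    (D : ℝ → ℝ) (hD : ∀ t, D t = e t - c t)
    (p : ℝ → ℝ)
    (hp : ∀ t, 0 ≤ t → HasDerivAt p (c t * p t * (1 - p t) - e t * p t) t)
    (hp0 : p 0 ∈ Set.Ioc (0 : ℝ) 1)
    (hB : 0 < bohlLower D) :
    ∃ L η : ℝ, 1 ≤ L ∧ 0 < η ∧ ∀ t, 0 ≤ t → p t ≤ L * p 0 * Real.exp (-η * t) := by
  obtain ⟨hp0_pos, -⟩ := hp0
  have hp_cont : ContinuousOn p (Set.Ici 0) := fun t ht =>
    ((hp t ht).continuousAt).continuousWithinAt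
  set a : ℝ → ℝ := fun t => c t * (1 - p t) - e t with ha_def
  have ha_cont : ContinuousOn a (Set.Ici 0) :=
    (hc_cont.mul (continuousOn_const.sub hp_cont)).sub he_cont
  have hD_cont : ContinuousOn D (Set.Ici 0) := by
    have : D = fun t => e t - c t := funext hD
    rw [this]; exact he_cont.sub hc_cont
  set A : ℝ → ℝ := fun t => ∫ τ in (0:ℝ)..t, a τ with hA_def
  -- interval integrability on [0,t]
  have hint : ∀ (f : ℝ → ℝ), ContinuousOn f (Set.Ici 0) → ∀ s t : ℝ, 0 ≤ s → s ≤ t →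
      IntervalIntegrable f MeasureTheory.volume s t := by
    intro f hf s t hs hst
    apply ContinuousOn.intervalIntegrable
    apply hf.mono
    rw [Set.uIcc_of_le hst]
    exact fun y hy => le_trans hs hy.1
  -- FTC: right derivative of A
  have hA : ∀ x : ℝ, 0 ≤ x → HasDerivWithinAt A (a x) (Set.Ici x) x := by
    intro x hx
    have hsub : Set.Ici x ⊆ Set.Ici (0:ℝ) := Set.Ici_subset_Ici.2 hx
    refine intervalIntegral.integral_hasDerivWithinAt_right
      (hint a ha_cont 0 x le_rfl hx) ?_ ?_
    · exact (ha_cont.mono (fun y (hy : x < y) => le_trans hx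
        hy.le)).stronglyMeasurableAtFilter_nhdsWithin measurableSet_Ioi x
    · exact ((ha_cont.mono hsub).continuousWithinAt (Set.self_mem_Ici)).mono Set.Ioi_subset_Ici_self
  have hA0 : A 0 = 0 := intervalIntegral.integral_same
  -- explicit solution formula
  have key : ∀ t, 0 ≤ t → p t = p 0 * Real.exp (A t) := by
    intro t ht
    have hA_contIcc : ContinuousOn A (Set.Icc 0 t) := by
      have h := intervalIntegral.continuousOn_primitive_interval'
        (hint a ha_cont 0 t le_rfl ht) (a := 0) Set.left_mem_uIcc
      rwa [Set.uIcc_of_le ht] at h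
    have hconst : ∀ x ∈ Set.Icc 0 t, p x * Real.exp (-(A x)) = p 0 * Real.exp (-(A 0)) := by
      refine constant_of_has_deriv_right_zero ?_ ?_
      · exact (hp_cont.mono (Set.Icc_subset_Ici_self)).mul ((hA_contIcc.neg).rexp)
      · intro x hx
        have hpx := (hp x hx.1).hasDerivWithinAt (s := Set.Ici x)
        have hE : HasDerivWithinAt (fun u => Real.exp (-(A u)))
            (Real.exp (-(A x)) * (-(a x))) (Set.Ici x) x := ((hA x hx.1).neg).exp
        have := hpx.mul hE
        convert this using 1
        · rfl
        · rfl
        simp only [ha_def]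
        ring

    have := hconst t ⟨ht, le_rfl⟩
    rw [hA0, neg_zero, Real.exp_zero, mul_one] at this
    rw [← this, Real.exp_neg]
    field_simp
  have hppos : ∀ t, 0 ≤ t → 0 < p t := fun t ht => by
    rw [key t ht]; positivity
  -- comparison: A t ≤ - ∫ D
  have hcomp : ∀ t, 0 ≤ t → A t ≤ -∫ τ in (0:ℝ)..t, D τ := by
    intro t ht
    have h1 : A t + ∫ τ in (0:ℝ)..t, D τ = ∫ τ in (0:ℝ)..t, (a τ + D τ) :=
      (intervalIntegral.integral_add (hint a ha_cont 0 t le_rfl ht)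
        (hint D hD_cont 0 t le_rfl ht)).symm
    have h2 : (fun τ => a τ + D τ) = fun τ => -(c τ * p τ) := by
      funext τ; simp only [ha_def, hD τ]; ring
    have h3 : 0 ≤ ∫ τ in (0:ℝ)..t, c τ * p τ := by
      refine intervalIntegral.integral_nonneg ht ?_
      intro u hu
      exact le_of_lt (mul_pos (hc_pos u hu.1) (hppos u hu.1))
    have h4 : A t + ∫ τ in (0:ℝ)..t, D τ ≤ 0 := by
      rw [h1, h2, intervalIntegral.integral_neg]
      linarith
    linarith
  -- bound on D and on bohlAvg
  obtain ⟨Mc, hMc⟩ := hc_bdd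
  obtain ⟨Me, hMe⟩ := he_bdd
  set M : ℝ := Mc + Me with hM_def
  have hM0 : 0 ≤ M := by
    have := hMc 0 le_rfl; have := hMe 0 le_rfl
    have := abs_nonneg (c 0); have := abs_nonneg (e 0); linarith
  have hDbound : ∀ x : ℝ, 0 ≤ x → |D x| ≤ M := by
    intro x hx
    rw [hD x]
    calc |e x - c x| ≤ |e x| + |c x| := abs_sub _ _
      _ ≤ Me + Mc := add_le_add (hMe x hx) (hMc x hx)
      _ = M := by rw [hM_def]; ring
  have hIbound : ∀ s t : ℝ, 0 ≤ s → s ≤ t → |∫ τ in s..t, D τ| ≤ M * (t - s) := by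
    intro s t hs hst
    have h := intervalIntegral.norm_integral_le_of_norm_le_const
      (f := D) (C := M) (a := s) (b := t) (fun x hx => by
        rw [Set.uIoc_of_le hst] at hx
        rw [Real.norm_eq_abs]
        exact hDbound x (le_trans hs (le_of_lt hx.1)))
    rw [Real.norm_eq_abs, abs_of_nonneg (by linarith : (0:ℝ) ≤ t - s)] at h
    exact h
  have hAvg : ∀ q : ℝ × ℝ, 0 ≤ q.1 ∧ q.1 < q.2 → |bohlAvg D q| ≤ M := by
    rintro ⟨s, t⟩ ⟨hs, hst⟩
    have hts : (0:ℝ) < t - s := by simpa using sub_pos.2 hst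
    have := hIbound s t hs hst.le
    rw [bohlAvg, abs_mul, abs_inv, abs_of_pos hts]
    calc (t - s)⁻¹ * |∫ τ in s..t, D τ| ≤ (t - s)⁻¹ * (M * (t - s)) := by
          exact mul_le_mul_of_nonneg_left this (inv_nonneg.2 hts.le)
      _ = M := by field_simp
  obtain ⟨η, hη, T, hT⟩ := bohl_extract D M hAvg hB
  -- assemble the constants
  set T' : ℝ := max T 1 with hT'_def
  have hT'1 : (1:ℝ) ≤ T' := le_max_right _ _
  have hT'0 : (0:ℝ) < T' := lt_of_lt_of_le one_pos hT'1
  set C : ℝ := (M + η) * T' with hC_def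
  have hC0 : 0 ≤ C := mul_nonneg (by linarith) hT'0.le
  refine ⟨Real.exp C, η, Real.one_le_exp hC0, hη, ?_⟩
  intro t ht
  -- lower bound on ∫ D
  have hInt : η * t - C ≤ ∫ τ in (0:ℝ)..t, D τ := by
    rcases le_or_gt T' t with hcase | hcase
    · have ht0 : 0 < t := lt_of_lt_of_le hT'0 hcase
      have := hT 0 t le_rfl ht0 (by simp only [sub_zero]; exact le_trans (le_max_left _ _) hcase)
      rw [bohlAvg] at this
      simp only [sub_zero] at this
      have h2 : η * t ≤ ∫ τ in (0:ℝ)..t, D τ := by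
        calc η * t = t * η := mul_comm _ _
          _ ≤ t * (t⁻¹ * ∫ τ in (0:ℝ)..t, D τ) := mul_le_mul_of_nonneg_left this ht0.le
          _ = ∫ τ in (0:ℝ)..t, D τ := by field_simp
      nlinarith
    · have := hIbound 0 t le_rfl ht
      rw [sub_zero] at this
      have h5 : -(M * t) ≤ ∫ τ in (0:ℝ)..t, D τ := neg_le_of_abs_le this
      have h6 : η * t ≤ η * T' := mul_le_mul_of_nonneg_left hcase.le hη.le
      have h7 : M * t ≤ M * T' := mul_le_mul_of_nonneg_left hcase.le hM0
      rw [hC_def]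
      nlinarith
  calc p t = p 0 * Real.exp (A t) := key t ht
    _ ≤ p 0 * Real.exp (C - η * t) := by
        refine mul_le_mul_of_nonneg_left (Real.exp_le_exp.2 ?_) hp0_pos.le
        have := hcomp t ht
        linarith
    _ = Real.exp C * p 0 * Real.exp (-η * t) := by
        rw [Real.exp_sub]
        rw [neg_mul, Real.exp_neg]
        field_simp
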